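/- Let f : [0,∞) → ℝ be continuous, bounded and strictly positive with f(0) = 1, define π'(γ) = ∫_0^∞ f(t) dγ(t) for γ ∈ M_b (via the Jordan decomposition), and define the relation ∼ on M_b by γ1 ∼ γ2 if and only if π'(γ1) = π'(γ2). Then (M_b, ∼) is a market of deterministic cash flows which is arbitrage-free; its uniquely determined NA price is π = π', with unit zero-coupon bond prices P_t = f(t); and the relation satisfies: (A1) t ↦ P_t is continuous, bounded and strictly positive; (A2) for every γ ∈ M_b⁺ and 0 ≤ s < t there exists b with min{P_r : r ∈ [s,t]} ≤ b ≤ max{P_r : r ∈ [s,t]} and π(γ_{(s,t]}) = b·γ((s,t]); (A3) whenever β_k, γ_k ∈ M_b⁺ with β_k ∼ γ_k for all k and both Σ_k β_k and Σ_k γ_k lie in M_b⁺, then Σ_k β_k ∼ Σ_k γ_k. -/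

import Mathlib

open MeasureTheory
open scoped NNReal

/-- The unit zero-coupon bond with maturity `t`: the Dirac measure at `t`,
as a finite signed Borel measure on `[0,∞)` (modeled as `ℝ≥0`). -/
noncomputable def uzcb (t : ℝ≥0) : SignedMeasure ℝ≥0 :=
  (MeasureTheory.Measure.dirac t).toSignedMeasure

/-- A market of deterministic cash flows: a reflexive, symmetric, additive relation on the
finite signed Borel measures on `[0,∞)` such that every nonzero nonnegative cash flow has at
least one strictly positive spot price. -/
def IsMarket (r : SignedMeasure ℝ≥0 → SignedMeasure ℝ≥0 → Prop) : Prop :=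
  (∀ γ, r γ γ) ∧
  (∀ γ₁ γ₂, r γ₁ γ₂ → r γ₂ γ₁) ∧
  (∀ γ₁ γ₂ γ₃ γ₄, r γ₁ γ₂ → r γ₃ γ₄ → r (γ₁ + γ₃) (γ₂ + γ₄)) ∧
  (∀ γ : SignedMeasure ℝ≥0, 0 ≤ γ → γ ≠ 0 → ∃ b : ℝ, 0 < b ∧ r γ (b • uzcb 0))

/-- No-arbitrage: no nonzero nonnegative cash flow is exchangeable for the null cash flow. -/
def NoArb (r : SignedMeasure ℝ≥0 → SignedMeasure ℝ≥0 → Prop) : Prop :=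
  ¬ ∃ γ : SignedMeasure ℝ≥0, 0 ≤ γ ∧ γ ≠ 0 ∧ r 0 γ

/-- Integral of a function against a finite signed Borel measure, defined via the Jordan
decomposition γ = γ⁺ - γ⁻ as ∫ f dγ⁺ - ∫ f dγ⁻. -/
noncomputable def sInt (f : ℝ≥0 → ℝ) (γ : SignedMeasure ℝ≥0) : ℝ :=
  (∫ t, f t ∂γ.toJordanDecomposition.posPart) -
    ∫ t, f t ∂γ.toJordanDecomposition.negPart

/-- `γ` is the (setwise) sum of the sequence of signed measures `f`. -/
def IsSumOf (γ : SignedMeasure ℝ≥0) (f : ℕ → SignedMeasure ℝ≥0) : Prop :=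
  ∀ A : Set ℝ≥0, MeasurableSet A → HasSum (fun k => f k A) (γ A)

section Aux

open MeasureTheory

variable {f : ℝ≥0 → ℝ}

lemma naux_integrable (hfcont : Continuous f) (hfbdd : ∃ M : ℝ, ∀ t, f t ≤ M)
    (hfpos : ∀ t, 0 < f t) (μ : Measure ℝ≥0) [IsFiniteMeasure μ] : Integrable f μ := by
  obtain ⟨M, hM⟩ := hfbdd
  exact (integrable_const M).mono' hfcont.aestronglyMeasurable
    (ae_of_all _ fun t => by
      rw [Real.norm_eq_abs, abs_of_pos (hfpos t)]; exact hM t)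

lemma naux_sInt_eq (hfcont : Continuous f) (hfbdd : ∃ M : ℝ, ∀ t, f t ≤ M)
    (hfpos : ∀ t, 0 < f t) (γ : SignedMeasure ℝ≥0) (μ ν : Measure ℝ≥0)
    [IsFiniteMeasure μ] [IsFiniteMeasure ν]
    (h : γ = μ.toSignedMeasure - ν.toSignedMeasure) :
    sInt f γ = (∫ t, f t ∂μ) - ∫ t, f t ∂ν := by
  set p := γ.toJordanDecomposition.posPart with hp
  set n := γ.toJordanDecomposition.negPart with hn
  have hγ : γ = p.toSignedMeasure - n.toSignedMeasure :=
    (γ.toSignedMeasure_toJordanDecomposition).symm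
  have key : p + ν = μ + n := by
    rw [← Measure.toSignedMeasure_eq_toSignedMeasure_iff,
      Measure.toSignedMeasure_add, Measure.toSignedMeasure_add]
    exact sub_eq_sub_iff_add_eq_add.mp (hγ.symm.trans h)
  have h1 : (∫ t, f t ∂(p + ν)) = ∫ t, f t ∂(μ + n) := by rw [key]
  rw [integral_add_measure (naux_integrable hfcont hfbdd hfpos p)
      (naux_integrable hfcont hfbdd hfpos ν),
    integral_add_measure (naux_integrable hfcont hfbdd hfpos μ)
      (naux_integrable hfcont hfbdd hfpos n)] at h1
  simp only [sInt, ← hp, ← hn]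
  linarith

lemma naux_sInt_toSM (hfcont : Continuous f) (hfbdd : ∃ M : ℝ, ∀ t, f t ≤ M)
    (hfpos : ∀ t, 0 < f t) (μ : Measure ℝ≥0) [IsFiniteMeasure μ] :
    sInt f μ.toSignedMeasure = ∫ t, f t ∂μ := by
  have := naux_sInt_eq hfcont hfbdd hfpos μ.toSignedMeasure μ 0
    (by rw [Measure.toSignedMeasure_zero, sub_zero])
  simpa using this

lemma naux_sInt_zero (hfcont : Continuous f) (hfbdd : ∃ M : ℝ, ∀ t, f t ≤ M)
    (hfpos : ∀ t, 0 < f t) : sInt f 0 = 0 := by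
  have := naux_sInt_toSM hfcont hfbdd hfpos (0 : Measure ℝ≥0)
  rw [Measure.toSignedMeasure_zero] at this
  simpa using this

lemma naux_sInt_add (hfcont : Continuous f) (hfbdd : ∃ M : ℝ, ∀ t, f t ≤ M)
    (hfpos : ∀ t, 0 < f t) (γ₁ γ₂ : SignedMeasure ℝ≥0) :
    sInt f (γ₁ + γ₂) = sInt f γ₁ + sInt f γ₂ := by
  set p₁ := γ₁.toJordanDecomposition.posPart
  set n₁ := γ₁.toJordanDecomposition.negPart
  set p₂ := γ₂.toJordanDecomposition.posPart
  set n₂ := γ₂.toJordanDecomposition.negPart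
  have h : γ₁ + γ₂ = (p₁ + p₂).toSignedMeasure - (n₁ + n₂).toSignedMeasure := by
    rw [Measure.toSignedMeasure_add, Measure.toSignedMeasure_add]
    conv_lhs => rw [← γ₁.toSignedMeasure_toJordanDecomposition,
      ← γ₂.toSignedMeasure_toJordanDecomposition]
    simp only [JordanDecomposition.toSignedMeasure]
    abel
  rw [naux_sInt_eq hfcont hfbdd hfpos _ _ _ h,
    integral_add_measure (naux_integrable hfcont hfbdd hfpos p₁)
      (naux_integrable hfcont hfbdd hfpos p₂),
    integral_add_measure (naux_integrable hfcont hfbdd hfpos n₁)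
      (naux_integrable hfcont hfbdd hfpos n₂)]
  simp only [sInt]
  ring

lemma naux_sInt_neg (hfcont : Continuous f) (hfbdd : ∃ M : ℝ, ∀ t, f t ≤ M)
    (hfpos : ∀ t, 0 < f t) (γ : SignedMeasure ℝ≥0) :
    sInt f (-γ) = -sInt f γ := by
  have h : -γ = γ.toJordanDecomposition.negPart.toSignedMeasure -
      γ.toJordanDecomposition.posPart.toSignedMeasure := by
    conv_lhs => rw [← γ.toSignedMeasure_toJordanDecomposition]
    simp only [JordanDecomposition.toSignedMeasure]
    abel
  rw [naux_sInt_eq hfcont hfbdd hfpos _ _ _ h]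
  simp only [sInt]
  ring

lemma naux_sInt_smul_toSM (hfcont : Continuous f) (hfbdd : ∃ M : ℝ, ∀ t, f t ≤ M)
    (hfpos : ∀ t, 0 < f t) (b : ℝ) (μ : Measure ℝ≥0) [IsFiniteMeasure μ] :
    sInt f (b • μ.toSignedMeasure) = b * ∫ t, f t ∂μ := by
  have hcase : ∀ c : ℝ, 0 ≤ c → sInt f (c • μ.toSignedMeasure) = c * ∫ t, f t ∂μ := by
    intro c hc
    have h1 : c • μ.toSignedMeasure = (c.toNNReal • μ).toSignedMeasure := by
      rw [Measure.toSignedMeasure_smul, NNReal.smul_def, Real.coe_toNNReal _ hc]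
    rw [h1, naux_sInt_toSM hfcont hfbdd hfpos, integral_smul_nnreal_measure,
      NNReal.smul_def, smul_eq_mul, Real.coe_toNNReal _ hc]
  rcases le_or_gt 0 b with hb | hb
  · exact hcase b hb
  · have h2 : b • μ.toSignedMeasure = -((-b) • μ.toSignedMeasure) := by
      ext i hi
      simp [hi]
    rw [h2, naux_sInt_neg hfcont hfbdd hfpos, hcase (-b) (by linarith)]
    ring

lemma naux_negPart_eq_zero {γ : SignedMeasure ℝ≥0} (h : 0 ≤ γ) :
    γ.toJordanDecomposition.negPart = 0 := by
  obtain ⟨u, hu, hpu, hnu⟩ := γ.toJordanDecomposition.mutuallySingular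
  have hγu : 0 ≤ γ u := by
    have := (VectorMeasure.le_iff.mp h) u hu
    simpa using this
  have happ : γ u = (γ.toJordanDecomposition.posPart u).toReal -
      (γ.toJordanDecomposition.negPart u).toReal := by
    conv_lhs => rw [← γ.toSignedMeasure_toJordanDecomposition]
    rw [JordanDecomposition.toSignedMeasure, Measure.toSignedMeasure_sub_apply hu]
    rfl
  rw [hpu] at happ
  simp only [ENNReal.toReal_zero, zero_sub] at happ
  have hnu0 : γ.toJordanDecomposition.negPart u = 0 := by
    have h1 : (γ.toJordanDecomposition.negPart u).toReal = 0 :=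
      le_antisymm (by linarith [happ ▸ hγu]) ENNReal.toReal_nonneg
    rcases ENNReal.toReal_eq_zero_iff _ |>.mp h1 with h2 | h2
    · exact h2
    · exact absurd h2 (measure_ne_top _ _)
  have huniv : γ.toJordanDecomposition.negPart Set.univ = 0 := by
    have : γ.toJordanDecomposition.negPart Set.univ ≤
        γ.toJordanDecomposition.negPart u + γ.toJordanDecomposition.negPart uᶜ := by
      rw [← Set.union_compl_self u]
      exact measure_union_le _ _
    rw [hnu0, hnu, add_zero] at this
    exact le_antisymm this zero_le
  exact Measure.measure_univ_eq_zero.mp huniv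

lemma naux_nonneg_eq_toSM {γ : SignedMeasure ℝ≥0} (h : 0 ≤ γ) :
    γ = γ.toJordanDecomposition.posPart.toSignedMeasure := by
  conv_lhs => rw [← γ.toSignedMeasure_toJordanDecomposition]
  rw [JordanDecomposition.toSignedMeasure]
  simp only [naux_negPart_eq_zero h, Measure.toSignedMeasure_zero, sub_zero]

lemma naux_toSM_restrict (μ : Measure ℝ≥0) [IsFiniteMeasure μ] {A : Set ℝ≥0}
    (hA : MeasurableSet A) :
    μ.toSignedMeasure.restrict A = (μ.restrict A).toSignedMeasure := by
  ext i hi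
  rw [VectorMeasure.restrict_apply _ hA hi,
    Measure.toSignedMeasure_apply_measurable (hi.inter hA),
    Measure.toSignedMeasure_apply_measurable hi, Measure.real, Measure.real, Measure.restrict_apply hi]

lemma naux_sInt_uzcb (hfcont : Continuous f) (hfbdd : ∃ M : ℝ, ∀ t, f t ≤ M)
    (hfpos : ∀ t, 0 < f t) (t : ℝ≥0) : sInt f (uzcb t) = f t := by
  rw [uzcb, naux_sInt_toSM hfcont hfbdd hfpos, integral_dirac]

lemma naux_sInt_pos (hfcont : Continuous f) (hfbdd : ∃ M : ℝ, ∀ t, f t ≤ M)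
    (hfpos : ∀ t, 0 < f t) {γ : SignedMeasure ℝ≥0} (h : 0 ≤ γ) (hne : γ ≠ 0) :
    0 < sInt f γ := by
  set μ := γ.toJordanDecomposition.posPart
  have hγμ : γ = μ.toSignedMeasure := naux_nonneg_eq_toSM h
  have hμne : μ ≠ 0 := by
    intro h0
    apply hne
    rw [hγμ]
    simp only [h0, Measure.toSignedMeasure_zero]
  rw [hγμ, naux_sInt_toSM hfcont hfbdd hfpos]
  rw [integral_pos_iff_support_of_nonneg (fun t => (hfpos t).le)
    (naux_integrable hfcont hfbdd hfpos μ)]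
  rw [show Function.support f = Set.univ from
    Set.eq_univ_of_forall fun x => (hfpos x).ne']
  exact Measure.measure_univ_pos.mpr hμne

lemma naux_sInt_isSumOf (hfcont : Continuous f) (hfbdd : ∃ M : ℝ, ∀ t, f t ≤ M)
    (hfpos : ∀ t, 0 < f t) {B : SignedMeasure ℝ≥0} {β : ℕ → SignedMeasure ℝ≥0}
    (hβ : ∀ k, 0 ≤ β k) (hB : 0 ≤ B) (hsum : IsSumOf B β) :
    sInt f B = ∑' k, sInt f (β k) := by
  set μk := fun k => (β k).toJordanDecomposition.posPart with hμk
  set μ := B.toJordanDecomposition.posPart with hμ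
  have hBμ : B = μ.toSignedMeasure := naux_nonneg_eq_toSM hB
  have hβμ : ∀ k, β k = (μk k).toSignedMeasure := fun k => naux_nonneg_eq_toSM (hβ k)
  have hμsum : μ = Measure.sum μk := by
    refine Measure.ext fun A hA => ?_
    rw [Measure.sum_apply _ hA]
    have h1 : HasSum (fun k => ((μk k) A).toReal) ((μ A).toReal) := by
      have h2 := hsum A hA
      have e1 : ∀ k, (β k) A = ((μk k) A).toReal := fun k => by
        rw [hβμ k, Measure.toSignedMeasure_apply_measurable hA]
        rfl
      have e2 : B A = (μ A).toReal := by
        rw [hBμ, Measure.toSignedMeasure_apply_measurable hA]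
        rfl
      rw [e2] at h2
      exact (funext e1 : (fun k => (β k) A) = _) ▸ h2
    calc μ A = ENNReal.ofReal ((μ A).toReal) :=
          (ENNReal.ofReal_toReal (measure_ne_top _ _)).symm
      _ = ENNReal.ofReal (∑' k, ((μk k) A).toReal) := by rw [h1.tsum_eq]
      _ = ∑' k, ENNReal.ofReal (((μk k) A).toReal) :=
          ENNReal.ofReal_tsum_of_nonneg (fun k => ENNReal.toReal_nonneg) h1.summable
      _ = ∑' k, (μk k) A := tsum_congr fun k =>
          ENNReal.ofReal_toReal (measure_ne_top _ _)
  have hint : Integrable f (Measure.sum μk) := by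
    rw [← hμsum]; exact naux_integrable hfcont hfbdd hfpos μ
  rw [hBμ, naux_sInt_toSM hfcont hfbdd hfpos, hμsum, integral_sum_measure hint]
  exact tsum_congr fun k => by
    rw [hβμ k, naux_sInt_toSM hfcont hfbdd hfpos]

end Aux

/-- Existence of NA markets. Given a continuous, bounded, strictly positive
f with f(0) = 1, the relation γ₁ ∼ γ₂ ⇔ ∫ f dγ₁ = ∫ f dγ₂ defines an arbitrage-free
market whose uniquely determined NA price is π' = ∫ f d·, with UZCB prices P_t = f(t),
and Assumptions (A1), (A2), (A3) hold. -/
theorem existence_of_NA_markets (f : ℝ≥0 → ℝ)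
    (hfcont : Continuous f) (hfbdd : ∃ M : ℝ, ∀ t, f t ≤ M) (hfpos : ∀ t, 0 < f t)
    (hf0 : f 0 = 1)
    (r : SignedMeasure ℝ≥0 → SignedMeasure ℝ≥0 → Prop)
    (hr : ∀ γ₁ γ₂ : SignedMeasure ℝ≥0, r γ₁ γ₂ ↔ sInt f γ₁ = sInt f γ₂) :
    IsMarket r ∧ NoArb r ∧
    -- the uniquely determined NA price is π = sInt f :
    (∀ γ : SignedMeasure ℝ≥0, r γ (sInt f γ • uzcb 0)) ∧
    (∀ g : SignedMeasure ℝ≥0 → ℝ, (∀ γ : SignedMeasure ℝ≥0, r γ (g γ • uzcb 0)) →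
      g = fun γ => sInt f γ) ∧
    -- the UZCB prices are P_t = f(t) :
    (∀ t : ℝ≥0, sInt f (uzcb t) = f t) ∧
    -- (A1) P is continuous, bounded, strictly positive :
    Continuous (fun t => sInt f (uzcb t)) ∧
    (∃ M : ℝ, ∀ t : ℝ≥0, sInt f (uzcb t) ≤ M) ∧
    (∀ t : ℝ≥0, 0 < sInt f (uzcb t)) ∧
    -- (A2) the average value requirement :
    (∀ γ : SignedMeasure ℝ≥0, 0 ≤ γ → ∀ s t : ℝ≥0, s < t →
      ∃ b : ℝ, sInf ((fun u => sInt f (uzcb u)) '' Set.Icc s t) ≤ b ∧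
        b ≤ sSup ((fun u => sInt f (uzcb u)) '' Set.Icc s t) ∧
        sInt f (γ.restrict (Set.Ioc s t)) = b * γ (Set.Ioc s t)) ∧
    -- (A3) σ-additivity of the relation :
    (∀ β γ : ℕ → SignedMeasure ℝ≥0, (∀ k, 0 ≤ β k) → (∀ k, 0 ≤ γ k) →
      (∀ k, r (β k) (γ k)) → ∀ B G : SignedMeasure ℝ≥0, 0 ≤ B → 0 ≤ G →
      IsSumOf B β → IsSumOf G γ → r B G) := by
  have huzcb : ∀ t : ℝ≥0, sInt f (uzcb t) = f t := naux_sInt_uzcb hfcont hfbdd hfpos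
  have hsmul : ∀ b : ℝ, sInt f (b • uzcb 0) = b := by
    intro b
    rw [uzcb, naux_sInt_smul_toSM hfcont hfbdd hfpos, integral_dirac, hf0, mul_one]
  refine ⟨⟨fun γ => (hr γ γ).mpr rfl, fun γ₁ γ₂ h => (hr _ _).mpr ((hr _ _).mp h).symm,
      fun γ₁ γ₂ γ₃ γ₄ h12 h34 => (hr _ _).mpr ?_, fun γ hγ hne => ?_⟩, ?_, ?_, ?_, huzcb,
      ?_, ?_, ?_, ?_, ?_⟩
  · rw [naux_sInt_add hfcont hfbdd hfpos, naux_sInt_add hfcont hfbdd hfpos,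
      (hr _ _).mp h12, (hr _ _).mp h34]
  · exact ⟨sInt f γ, naux_sInt_pos hfcont hfbdd hfpos hγ hne,
      (hr _ _).mpr (hsmul _).symm⟩
  · rintro ⟨γ, hγ, hne, h0γ⟩
    have h1 := (hr _ _).mp h0γ
    rw [naux_sInt_zero hfcont hfbdd hfpos] at h1
    exact absurd h1.symm (ne_of_gt (naux_sInt_pos hfcont hfbdd hfpos hγ hne))
  · exact fun γ => (hr _ _).mpr (hsmul _).symm
  · intro g hg
    funext γ
    have := (hr _ _).mp (hg γ)
    rw [hsmul] at this
    exact this.symm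
  · simpa only [huzcb] using hfcont
  · obtain ⟨M, hM⟩ := hfbdd
    exact ⟨M, fun t => by rw [huzcb]; exact hM t⟩
  · intro t; rw [huzcb]; exact hfpos t
  · -- (A2)
    intro γ hγ s t hst
    simp only [huzcb]
    set μ := γ.toJordanDecomposition.posPart with hμdef
    have hγμ : γ = μ.toSignedMeasure := naux_nonneg_eq_toSM hγ
    have hA : MeasurableSet (Set.Ioc s t) := measurableSet_Ioc
    have hres : sInt f (γ.restrict (Set.Ioc s t)) = ∫ x in Set.Ioc s t, f x ∂μ := by
      conv_lhs => rw [hγμ]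
      rw [naux_toSM_restrict μ hA, naux_sInt_toSM hfcont hfbdd hfpos]
    have happ : γ (Set.Ioc s t) = (μ (Set.Ioc s t)).toReal := by
      rw [hγμ, Measure.toSignedMeasure_apply_measurable hA]
      rfl
    set c := (μ (Set.Ioc s t)).toReal with hc
    set K := f '' Set.Icc s t with hK
    have hKcpt : IsCompact K := isCompact_Icc.image hfcont
    have hsK : f s ∈ K := ⟨s, Set.left_mem_Icc.mpr hst.le, rfl⟩
    have hbdb : BddBelow K := hKcpt.bddBelow
    have hbda : BddAbove K := hKcpt.bddAbove
    have hc0 : 0 ≤ c := ENNReal.toReal_nonneg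
    by_cases hczero : c = 0
    · refine ⟨f s, csInf_le hbdb hsK, le_csSup hbda hsK, ?_⟩
      have hμ0 : μ (Set.Ioc s t) = 0 := by
        rcases (ENNReal.toReal_eq_zero_iff _).mp hczero with h2 | h2
        · exact h2
        · exact absurd h2 (measure_ne_top _ _)
      rw [hres, happ, hczero, mul_zero, Measure.restrict_eq_zero.mpr hμ0,
        integral_zero_measure]
    · have hcpos : 0 < c := lt_of_le_of_ne hc0 (Ne.symm hczero)
      set I := ∫ x in Set.Ioc s t, f x ∂μ with hI
      have hmem : ∀ x ∈ Set.Ioc s t, f x ∈ K := fun x hx =>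
        ⟨x, Set.Ioc_subset_Icc_self hx, rfl⟩
      have hIlow : sInf K * c ≤ I := by
        have h1 : (∫ _ in Set.Ioc s t, sInf K ∂μ) ≤ I :=
          setIntegral_mono_on (integrable_const _).integrableOn
            (naux_integrable hfcont hfbdd hfpos μ).integrableOn hA
            (fun x hx => csInf_le hbdb (hmem x hx))
        rwa [setIntegral_const, smul_eq_mul, mul_comm] at h1
      have hIup : I ≤ sSup K * c := by
        have h1 : I ≤ ∫ _ in Set.Ioc s t, sSup K ∂μ :=
          setIntegral_mono_on (naux_integrable hfcont hfbdd hfpos μ).integrableOn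
            (integrable_const _).integrableOn hA
            (fun x hx => le_csSup hbda (hmem x hx))
        rwa [setIntegral_const, smul_eq_mul, mul_comm] at h1
      refine ⟨I / c, (le_div_iff₀ hcpos).mpr hIlow, (div_le_iff₀ hcpos).mpr hIup, ?_⟩
      rw [hres, happ, div_mul_cancel₀ _ hczero]
  · -- (A3)
    intro β γ' hβ hγ' hbg B G hB hG hsB hsG
    rw [hr]
    rw [naux_sInt_isSumOf hfcont hfbdd hfpos hβ hB hsB,
      naux_sInt_isSumOf hfcont hfbdd hfpos hγ' hG hsG]
    exact tsum_congr fun k => (hr _ _).mp (hbg k)
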